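/- Let k be a field, σ and τ finite sets, and w: σ → ℤ_{>0}, v: τ → ℤ_{>0} functions assigning positive integer weights. Grade the polynomial rings A = k[X_s : s ∈ σ] and B = k[Y_r : r ∈ τ] by giving X_s degree w(s) and Y_r degree v(r). Let φ: A → B be a k-algebra homomorphism that sends every homogeneous element of degree n to a homogeneous element of degree n. Let m_A ⊆ A and m_B ⊆ B be the ideals generated by all the variables, and suppose the induced k-linear map m_A/m_A² → m_B/m_B² is bijective. Then φ is a ring isomorphism. -/

import Mathlib

open MvPolynomial

noncomputable section

namespace Stmt14Aux

variable {k : Type*} [Field k] {σ τ : Type*}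

/-- Positive weight of a nonzero exponent vector. -/
lemma weight_pos {v : τ → ℕ} (hv : ∀ r, 0 < v r) {d : τ →₀ ℕ} (hd : d ≠ 0) :
    0 < Finsupp.weight v d := by
  obtain ⟨r, hr⟩ : ∃ r, d r ≠ 0 := by
    by_contra h
    push_neg at h
    exact hd (Finsupp.ext fun r => h r)
  have h1 : d r ≤ Finsupp.weight v d := Finsupp.le_weight v (hv r).ne' d
  omega

lemma weight_single_one (v : τ → ℕ) (r : τ) :
    Finsupp.weight v (Finsupp.single r 1) = v r := by
  rw [Finsupp.weight_apply, Finsupp.sum_single_index] <;> simp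

lemma degree_single_one (r : τ) : Finsupp.degree (Finsupp.single r 1) = 1 := by
  rw [Finsupp.degree_eq_weight_one]
  simpa using weight_single_one (fun _ : τ => 1) r

/-- A graded algebra hom commutes with taking weighted homogeneous components. -/
lemma comp_commute {w : σ → ℕ} {v : τ → ℕ}
    (χ : MvPolynomial σ k →ₐ[k] MvPolynomial τ k)
    (hχ : ∀ (n : ℕ) (p : MvPolynomial σ k),
      p.IsWeightedHomogeneous w n → (χ p).IsWeightedHomogeneous v n)
    (n : ℕ) (p : MvPolynomial σ k) :
    χ (weightedHomogeneousComponent w n p) =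
      weightedHomogeneousComponent v n (χ p) := by
  classical
  have hfin := weightedHomogeneousComponent_finsupp (w := w) p
  have hp : ∑ m ∈ hfin.toFinset, weightedHomogeneousComponent w m p = p := by
    rw [← finsum_eq_sum _ hfin, sum_weightedHomogeneousComponent]
  conv_rhs => rw [← hp, map_sum, map_sum]
  rw [Finset.sum_congr rfl (fun m _ => weightedHomogeneousComponent_of_mem
    (hχ m _ (weightedHomogeneousComponent_isWeightedHomogeneous m p)))]
  rw [Finset.sum_ite_eq]
  split_ifs with h
  · rfl
  · have : weightedHomogeneousComponent w n p = 0 := by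
      by_contra h'
      exact h (hfin.mem_toFinset.mpr h')
    rw [this, map_zero]

/-- Homogeneous polynomials of nonzero degree lie in the ideal generated by the variables. -/
lemma mem_span_X {w : σ → ℕ} {n : ℕ} (hn : n ≠ 0) {p : MvPolynomial σ k}
    (hp : p.IsWeightedHomogeneous w n) :
    p ∈ Ideal.span (Set.range (X : σ → MvPolynomial σ k)) := by
  have hr : (Set.range (X : σ → MvPolynomial σ k)) = X '' Set.univ := by simp
  rw [hr, mem_ideal_span_X_image]
  intro m hm
  have hm' : Finsupp.weight w m = n := hp (mem_support_iff.mp hm)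
  have hm0 : m ≠ 0 := by
    rintro rfl
    rw [map_zero] at hm'
    exact hn hm'.symm
  obtain ⟨i, hi⟩ : ∃ i, m i ≠ 0 := by
    by_contra h
    push_neg at h
    exact hm0 (Finsupp.ext fun i => h i)
  exact ⟨i, Set.mem_univ i, hi⟩

/-- The ideal of polynomials with no coefficients in degrees ≤ 1. -/
def lowIdeal (k σ : Type*) [Field k] : Ideal (MvPolynomial σ k) where
  carrier := {p | ∀ d : σ →₀ ℕ, Finsupp.degree d ≤ 1 → coeff d p = 0}
  zero_mem' := by intro d _; simp
  add_mem' := by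
    intro a b ha hb d hd
    rw [coeff_add, ha d hd, hb d hd, add_zero]
  smul_mem' := by
    classical
    intro c x hx d hd
    rw [smul_eq_mul, coeff_mul]
    apply Finset.sum_eq_zero
    rintro ⟨u, t⟩ hut
    have h : u + t = d := Finset.HasAntidiagonal.mem_antidiagonal.mp hut
    have ht : Finsupp.degree t ≤ 1 := by
      have h2 : Finsupp.degree u + Finsupp.degree t = Finsupp.degree d := by
        rw [← h]; simp [Finsupp.degree_eq_weight_one, map_add]
      omega
    rw [hx t ht, mul_zero]

lemma constantCoeff_of_mem_span {p : MvPolynomial σ k}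
    (hp : p ∈ Ideal.span (Set.range (X : σ → MvPolynomial σ k))) :
    constantCoeff p = 0 := by
  have : Ideal.span (Set.range (X : σ → MvPolynomial σ k)) ≤
      RingHom.ker (constantCoeff (R := k) (σ := σ)) := by
    rw [Ideal.span_le]
    rintro _ ⟨i, rfl⟩
    simp [RingHom.mem_ker]
  exact this hp

lemma sq_le_lowIdeal :
    (Ideal.span (Set.range (X : σ → MvPolynomial σ k))) ^ 2 ≤ lowIdeal k σ := by
  classical
  rw [pow_two, Ideal.mul_le]
  intro r hr s hs d hd
  rw [coeff_mul]
  apply Finset.sum_eq_zero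
  rintro ⟨u, t⟩ hut
  have h : u + t = d := Finset.HasAntidiagonal.mem_antidiagonal.mp hut
  have hdeg : Finsupp.degree u + Finsupp.degree t ≤ 1 := by
    have h2 : Finsupp.degree u + Finsupp.degree t = Finsupp.degree d := by
      rw [← h]; simp [Finsupp.degree_eq_weight_one, map_add]
    omega
  have h01 : Finsupp.degree u = 0 ∨ Finsupp.degree t = 0 := by omega
  rcases h01 with hu | ht
  · have hu0 : u = 0 := (Finsupp.degree_eq_zero_iff u).mp hu
    subst hu0
    rw [← constantCoeff_eq, constantCoeff_of_mem_span hr, zero_mul]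
  · have ht0 : t = 0 := (Finsupp.degree_eq_zero_iff t).mp ht
    subst ht0
    rw [← constantCoeff_eq, constantCoeff_of_mem_span hs, mul_zero]

/-- A finsupp of degree 1 is a single. -/
lemma eq_single_of_degree_one {d : τ →₀ ℕ} (hd : Finsupp.degree d = 1) :
    ∃ i, d = Finsupp.single i 1 := by
  classical
  have hd0 : d ≠ 0 := by
    intro h; rw [h, map_zero] at hd; omega
  obtain ⟨i, hi⟩ : ∃ i, d i ≠ 0 := by
    by_contra h; push_neg at h; exact hd0 (Finsupp.ext fun i => h i)
  refine ⟨i, Finsupp.ext fun j => ?_⟩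
  by_cases hji : j = i
  · subst hji
    have h1 : d j ≤ 1 := hd ▸ Finsupp.le_degree j d
    simp only [Finsupp.single_eq_same]
    omega
  · simp only [Finsupp.single_eq_of_ne' (Ne.symm hji)]
    by_contra hj
    have hij : ({i, j} : Finset τ) ⊆ d.support := by
      intro x hx
      simp only [Finset.mem_insert, Finset.mem_singleton] at hx
      rcases hx with rfl | rfl <;> simpa [Finsupp.mem_support_iff] using by assumption
    have h2 : d i + d j ≤ Finsupp.degree d := by
      have := Finset.sum_le_sum_of_subset hij (f := fun x => d x)
      rwa [Finset.sum_pair (Ne.symm hji)] at this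
    omega

lemma weightedHomogeneousComponent_mem_lowIdeal {v : τ → ℕ} {q : MvPolynomial τ k}
    (hq : q ∈ lowIdeal k τ) (n : ℕ) :
    weightedHomogeneousComponent v n q ∈ lowIdeal k τ := by
  classical
  intro d hd
  rw [coeff_weightedHomogeneousComponent]
  split_ifs with h
  · exact hq d hd
  · rfl

/-- `aeval` at homogeneous values of the right degrees preserves homogeneity. -/
lemma aeval_isWeightedHomogeneous {w : σ → ℕ} {v : τ → ℕ} (f : τ → MvPolynomial σ k)
    (hf : ∀ r, (f r).IsWeightedHomogeneous w (v r)) (n : ℕ) {b : MvPolynomial τ k}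
    (hb : b.IsWeightedHomogeneous v n) :
    (aeval f b).IsWeightedHomogeneous w n := by
  classical
  rw [← support_sum_monomial_coeff b, map_sum]
  apply IsWeightedHomogeneous.sum
  intro d hd
  rw [aeval_monomial]
  have hprod : (d.prod fun r m => f r ^ m).IsWeightedHomogeneous w
      (∑ r ∈ d.support, d r • v r) := by
    rw [Finsupp.prod]
    apply IsWeightedHomogeneous.prod
    intro r _
    have : ((f r) ^ (d r)).IsWeightedHomogeneous w (∑ _x ∈ Finset.range (d r), v r) := by
      have := IsWeightedHomogeneous.prod (Finset.range (d r)) (fun _ => f r)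
        (fun _ => v r) (w := w) (fun _ _ => hf r)
      rwa [Finset.prod_const, Finset.card_range] at this
    simpa [smul_eq_mul, mul_comm] using this
  have hwd : (∑ r ∈ d.support, d r • v r) = n := by
    rw [← hb (mem_support_iff.mp hd), Finsupp.weight_apply, Finsupp.sum]
  rw [hwd] at hprod
  have := (isWeightedHomogeneous_C w (coeff d b)).mul hprod
  rwa [zero_add, ← algebraMap_eq] at this

/-- Key surjectivity lemma. -/
lemma surj {w : σ → ℕ} {v : τ → ℕ} (hv : ∀ r, 0 < v r)
    (χ : MvPolynomial σ k →ₐ[k] MvPolynomial τ k)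
    (hχ : ∀ (n : ℕ) (p : MvPolynomial σ k),
      p.IsWeightedHomogeneous w n → (χ p).IsWeightedHomogeneous v n)
    (hx : ∀ r : τ, ∃ p : MvPolynomial σ k, χ p - X r ∈ lowIdeal k τ) :
    Function.Surjective χ := by
  classical
  have key : ∀ n (d : τ →₀ ℕ), Finsupp.weight v d = n → ∀ c : k,
      monomial d c ∈ χ.range := by
    intro n
    induction n using Nat.strong_induction_on with
    | _ n ih =>
    -- first handle monomials with at least two variables
    have hbig : ∀ d : τ →₀ ℕ, Finsupp.weight v d = n → 2 ≤ Finsupp.degree d →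
        ∀ c : k, monomial d c ∈ χ.range := by
      intro d hd hdeg c
      obtain ⟨i, hi⟩ : ∃ i, d i ≠ 0 := by
        by_contra h; push_neg at h
        have : d = 0 := Finsupp.ext fun i => h i
        rw [this, map_zero] at hdeg; omega
      set e := d - Finsupp.single i 1 with he
      have hde : d = Finsupp.single i 1 + e := by
        ext j
        simp only [Finsupp.add_apply, Finsupp.tsub_apply, he]
        by_cases hj : j = i
        · subst hj; simp only [Finsupp.single_eq_same]; omega
        · simp only [Finsupp.single_eq_of_ne' (Ne.symm hj)]; omega
      have hdege : Finsupp.degree e ≠ 0 := by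
        have : Finsupp.degree d = Finsupp.degree (Finsupp.single i 1) + Finsupp.degree e := by
          rw [hde]; simp [Finsupp.degree_eq_weight_one, map_add]
        rw [degree_single_one] at this
        omega
      have hene : e ≠ 0 := fun h => hdege (by rw [h, map_zero])
      have hwe : 0 < Finsupp.weight v e := weight_pos hv hene
      have hsplit : v i + Finsupp.weight v e = n := by
        rw [← hd, hde, map_add, weight_single_one]
      have h1 : (X i : MvPolynomial τ k) ∈ χ.range := by
        have := ih (v i) (by omega) (Finsupp.single i 1) (weight_single_one v i) 1
        rwa [← X] at this
      have h2 : monomial e c ∈ χ.range :=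
        ih (Finsupp.weight v e) (by have := hv i; omega) e rfl c
      have : monomial d c = X i * monomial e c := by
        rw [X, monomial_mul, one_mul, ← hde]
      rw [this]
      exact mul_mem h1 h2
    intro d hd c
    rcases Nat.lt_or_ge (Finsupp.degree d) 2 with hdeg | hdeg
    · interval_cases h : Finsupp.degree d
      · -- constant
        have : d = 0 := (Finsupp.degree_eq_zero_iff d).mp h
        subst this
        rw [← C_apply]
        simpa using algebraMap_mem χ.range c
      · -- a variable
        obtain ⟨i, rfl⟩ := eq_single_of_degree_one h
        have hn : v i = n := by rwa [weight_single_one] at hd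
        obtain ⟨p, hp⟩ := hx i
        have hXi : (X i : MvPolynomial τ k) ∈ χ.range := by
          set q := χ p - X i with hq
          have hχp : χ p = X i + q := by rw [hq]; ring
          have hcomp : χ (weightedHomogeneousComponent w n p) =
              X i + weightedHomogeneousComponent v n q := by
            rw [comp_commute χ hχ, hχp, map_add]
            congr 1
            exact (hn ▸ (isWeightedHomogeneous_X k v i)
              ).weightedHomogeneousComponent_same
          have hqlow : weightedHomogeneousComponent v n q ∈ lowIdeal k τ :=
            weightedHomogeneousComponent_mem_lowIdeal hp n
          have hqhom := weightedHomogeneousComponent_isWeightedHomogeneous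
            (w := v) n q
          have hqmem : weightedHomogeneousComponent v n q ∈ χ.range := by
            rw [← support_sum_monomial_coeff (weightedHomogeneousComponent v n q)]
            apply sum_mem
            intro d' hd'
            have hcne := mem_support_iff.mp hd'
            have hw' : Finsupp.weight v d' = n := hqhom hcne
            have hdeg' : 2 ≤ Finsupp.degree d' := by
              by_contra h'
              exact hcne (hqlow d' (by omega))
            exact hbig d' hw' hdeg' _
          have : (X i : MvPolynomial τ k) =
              χ (weightedHomogeneousComponent w n p) -
                weightedHomogeneousComponent v n q := by
            rw [hcomp]; ring
          rw [this]
          exact sub_mem ⟨_, rfl⟩ hqmem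
        have : monomial (Finsupp.single i 1) c = C c * X i := by
          rw [X, C_mul_monomial, mul_one]
        rw [this]
        exact mul_mem (algebraMap_mem χ.range c) hXi
    · exact hbig d hd hdeg c
  intro b
  have hb : b ∈ χ.range := by
    rw [← support_sum_monomial_coeff b]
    exact sum_mem fun d _ => key (Finsupp.weight v d) d rfl _
  exact hb.imp fun p hp => hp

end Stmt14Aux

open Stmt14Aux

/-- Let `A = k[X_s : s ∈ σ]` and `B = k[Y_r : r ∈ τ]` be polynomial rings over
a field `k` in finitely many variables, graded by strictly positive integer weights `w`, `v`.
Let `φ : A → B` be a `k`-algebra homomorphism sending homogeneous elements of degree `n` to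
homogeneous elements of degree `n`.  If the induced `k`-linear map
`m_A/m_A² → m_B/m_B²` (here `g`, on cotangent spaces of the ideals generated by the variables)
is bijective, then `φ` is a ring isomorphism (i.e. bijective). -/
theorem stmt14 (k : Type*) [Field k] (σ τ : Type*) [Finite σ] [Finite τ]
    (w : σ → ℕ) (v : τ → ℕ) (hw : ∀ s, 0 < w s) (hv : ∀ r, 0 < v r)
    (φ : MvPolynomial σ k →ₐ[k] MvPolynomial τ k)
    (hhom : ∀ (n : ℕ) (p : MvPolynomial σ k),
      p.IsWeightedHomogeneous w n → (φ p).IsWeightedHomogeneous v n)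
    (mA : Ideal (MvPolynomial σ k)) (hmA : mA = Ideal.span (Set.range MvPolynomial.X))
    (mB : Ideal (MvPolynomial τ k)) (hmB : mB = Ideal.span (Set.range MvPolynomial.X))
    (hle : ∀ p ∈ mA, φ p ∈ mB)
    (g : mA.Cotangent →ₗ[k] mB.Cotangent)
    (hg : ∀ p : mA, g (mA.toCotangent p) = mB.toCotangent ⟨φ p, hle p p.2⟩)
    (hbij : Function.Bijective g) :
    Function.Bijective φ := by
  classical
  -- Step 1: φ is surjective
  have hx : ∀ r : τ, ∃ p : MvPolynomial σ k, φ p - X r ∈ lowIdeal k τ := by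
    intro r
    have hXr : (X r : MvPolynomial τ k) ∈ mB := by
      rw [hmB]; exact Ideal.subset_span ⟨r, rfl⟩
    obtain ⟨pc, hpc⟩ := hbij.2 (mB.toCotangent ⟨X r, hXr⟩)
    obtain ⟨p0, rfl⟩ := mA.toCotangent_surjective pc
    rw [hg p0] at hpc
    have hsub : φ p0 - X r ∈ mB ^ 2 := by
      have := (Ideal.toCotangent_eq (I := mB)).mp hpc
      simpa using this
    exact ⟨p0, sq_le_lowIdeal (hmB ▸ hsub)⟩
  have hφs : Function.Surjective φ := surj hv φ hhom hx
  -- Step 2: construct a graded right inverse ψ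
  have hpre := fun r : τ => hφs (X r)
  choose p hp using hpre
  set q : τ → MvPolynomial σ k := fun r => weightedHomogeneousComponent w (v r) (p r)
    with hqdef
  have hφq : ∀ r, φ (q r) = X r := by
    intro r
    rw [hqdef]
    simp only
    rw [comp_commute φ hhom, hp r]
    exact (isWeightedHomogeneous_X k v r).weightedHomogeneousComponent_same
  have hqhom : ∀ r, (q r).IsWeightedHomogeneous w (v r) := fun r =>
    weightedHomogeneousComponent_isWeightedHomogeneous (v r) (p r)
  set ψ : MvPolynomial τ k →ₐ[k] MvPolynomial σ k := aeval q with hψdef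
  have hψhom : ∀ (n : ℕ) (b : MvPolynomial τ k),
      b.IsWeightedHomogeneous v n → (ψ b).IsWeightedHomogeneous w n := fun n b hb =>
    aeval_isWeightedHomogeneous q hqhom n hb
  have hφψ : ∀ b, φ (ψ b) = b := by
    have : φ.comp ψ = AlgHom.id k (MvPolynomial τ k) := by
      apply MvPolynomial.algHom_ext
      intro r
      simp [hψdef, hφq r]
    intro b
    calc φ (ψ b) = (φ.comp ψ) b := rfl
    _ = b := by rw [this]; rfl
  -- Step 3: ψ is surjective
  have hxψ : ∀ s : σ, ∃ b : MvPolynomial τ k, ψ b - X s ∈ lowIdeal k σ := by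
    intro s
    refine ⟨φ (X s), ?_⟩
    set a : MvPolynomial σ k := ψ (φ (X s)) - X s with hadef
    have hahom : a.IsWeightedHomogeneous w (w s) := by
      rw [hadef]
      have h1 : (ψ (φ (X s))).IsWeightedHomogeneous w (w s) :=
        hψhom _ _ (hhom _ _ (isWeightedHomogeneous_X k w s))
      exact (weightedHomogeneousSubmodule k w (w s)).sub_mem h1
        (isWeightedHomogeneous_X k w s)
    have haA : a ∈ mA := by
      rw [hmA]; exact mem_span_X (hw s).ne' hahom
    have hφa : φ a = 0 := by
      rw [hadef, map_sub, hφψ, sub_self]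
    have hzero : g (mA.toCotangent ⟨a, haA⟩) = 0 := by
      rw [hg ⟨a, haA⟩]
      have : (⟨φ a, hle _ haA⟩ : mB) = 0 := Subtype.ext hφa
      rw [this, map_zero]
    have h0 : mA.toCotangent ⟨a, haA⟩ = 0 := by
      apply hbij.1
      rw [hzero, map_zero]
    have hsq : a ∈ mA ^ 2 := (Ideal.toCotangent_eq_zero mA ⟨a, haA⟩).mp h0
    exact sq_le_lowIdeal (hmA ▸ hsq)
  have hψs : Function.Surjective ψ := surj hw ψ hψhom hxψ
  -- Step 4: conclude
  constructor
  · intro x y hxy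
    obtain ⟨x', rfl⟩ := hψs x
    obtain ⟨y', rfl⟩ := hψs y
    rw [hφψ x', hφψ y'] at hxy
    rw [hxy]
  · intro b
    exact ⟨ψ b, hφψ b⟩
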